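/- Let α ∈ K, let f(x) = Σ_{i=0}^d a_i (x − α)^i be a polynomial over K, and let β, β′ ∈ K with β ≠ α and v(β′ − β) > v(β − α) (i.e., rv(β′ − α) = rv(β − α)). Then f has a collision at β around α if and only if f has a collision at β′ around α. -/

import Mathlib

open Polynomial

open Finset

section aux
variable {K : Type*} [Field K] {Γ : Type*} [AddCommGroup Γ] [LinearOrder Γ] [IsOrderedAddMonoid Γ]
  (v : K → WithTop Γ)
  (hv0 : ∀ x : K, v x = ⊤ ↔ x = 0)
  (hvmul : ∀ x y : K, v (x * y) = v x + v y)
  (hvadd : ∀ x y : K, min (v x) (v y) ≤ v (x + y))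

include hv0 hvmul in
lemma aux_v1 : v 1 = 0 := by
  have hne : v 1 ≠ ⊤ := by simp [hv0]
  obtain ⟨g, hg⟩ := WithTop.ne_top_iff_exists.mp hne
  have h := hvmul 1 1
  rw [one_mul, ← hg, ← WithTop.coe_add, WithTop.coe_inj] at h
  have : g = 0 := by
    have := add_left_cancel (a := g) (b := (0:Γ)) (c := g) (by rw [add_zero, ← h])
    exact this.symm
  rw [← hg, this, WithTop.coe_zero]

include hv0 hvmul in
lemma aux_vneg (x : K) : v (-x) = v x := by
  have hm1 : v (-1 : K) = 0 := by
    have hne : v (-1 : K) ≠ ⊤ := by simp [hv0]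
    obtain ⟨g, hg⟩ := WithTop.ne_top_iff_exists.mp hne
    have h := hvmul (-1 : K) (-1)
    rw [neg_mul_neg, one_mul, aux_v1 v hv0 hvmul, ← hg, ← WithTop.coe_add] at h
    have h2 : g + g = 0 := by exact_mod_cast h.symm
    have h3 : g = 0 := by
      by_contra hg0
      rcases lt_or_gt_of_ne hg0 with hl | hl
      · exact absurd h2 (ne_of_lt (by simpa using add_lt_add hl hl))
      · exact absurd h2 (ne_of_gt (by simpa using add_lt_add hl hl))
    rw [← hg, h3, WithTop.coe_zero]
  calc v (-x) = v ((-1) * x) := by ring_nf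
    _ = v (-1:K) + v x := hvmul _ _
    _ = v x := by rw [hm1, zero_add]

include hv0 hvmul hvadd in
lemma aux_vsub (x y : K) : min (v x) (v y) ≤ v (x - y) := by
  have := hvadd x (-y)
  rwa [aux_vneg v hv0 hvmul, ← sub_eq_add_neg] at this

include hv0 hvmul in
lemma aux_vpow (x : K) (n : ℕ) : v (x ^ n) = n • v x := by
  induction n with
  | zero => simp [aux_v1 v hv0 hvmul]
  | succ k ih => rw [pow_succ, hvmul, ih, succ_nsmul]

include hv0 hvadd in
lemma aux_sum_le {ι : Type*} (s : Finset ι) (g : ι → K) (c : WithTop Γ)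
    (h : ∀ i ∈ s, c ≤ v (g i)) : c ≤ v (∑ i ∈ s, g i) := by
  classical
  induction s using Finset.induction with
  | empty => simp [(hv0 0).mpr rfl]
  | insert _ _ hx ih =>
    rw [Finset.sum_insert hx]
    refine le_trans ?_ (hvadd _ _)
    exact le_min (h _ (mem_insert_self _ _)) (ih fun i hi => h i (mem_insert_of_mem hi))

include hv0 hvadd in
lemma aux_sum_lt {ι : Type*} (s : Finset ι) (g : ι → K) (c : WithTop Γ)
    (hc : c < ⊤) (h : ∀ i ∈ s, c < v (g i)) : c < v (∑ i ∈ s, g i) := by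
  classical
  induction s using Finset.induction with
  | empty => simpa [(hv0 0).mpr rfl]
  | insert _ _ hx ih =>
    rw [Finset.sum_insert hx]
    refine lt_of_lt_of_le ?_ (hvadd _ _)
    exact lt_min (h _ (mem_insert_self _ _)) (ih fun i hi => h i (mem_insert_of_mem hi))

include hv0 hvmul hvadd in
lemma aux_veq (α β β' : K) (hβ : β ≠ α) (hββ' : v (β - α) < v (β' - β)) :
    v (β' - α) = v (β - α) := by
  have h1 : v (β - α) ≤ v (β' - α) := by
    have e : β' - α = (β - α) + (β' - β) := by ring
    rw [e]
    exact le_trans (le_min le_rfl hββ'.le) (hvadd _ _)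
  have h2 : v (β' - α) ≤ v (β - α) := by
    by_contra h
    push_neg at h
    have e : β - α = (β' - α) - (β' - β) := by ring
    have := aux_vsub v hv0 hvmul hvadd (β' - α) (β' - β)
    rw [← e] at this
    exact absurd (lt_min h hββ') (not_lt.mpr this)
  exact le_antisymm h2 h1

include hv0 hvmul hvadd in
lemma aux_main (α : K) (d : ℕ) (a : ℕ → K) (β β' : K) (hβ : β ≠ α)
    (hββ' : v (β - α) < v (β' - β))
    (h : ((Finset.range (d + 1)).inf' ⟨0, Finset.mem_range.mpr (Nat.succ_pos d)⟩
        fun i => v (a i * (β - α) ^ i)) < v (∑ i ∈ Finset.range (d + 1), a i * (β - α) ^ i)) :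
    ((Finset.range (d + 1)).inf' ⟨0, Finset.mem_range.mpr (Nat.succ_pos d)⟩
        fun i => v (a i * (β' - α) ^ i)) < v (∑ i ∈ Finset.range (d + 1), a i * (β' - α) ^ i) := by
  rcases eq_or_ne β' β with rfl | hne
  · exact h
  have heq : v (β' - α) = v (β - α) := aux_veq v hv0 hvmul hvadd α β β' hβ hββ'
  set L := (Finset.range (d + 1)).inf' ⟨0, Finset.mem_range.mpr (Nat.succ_pos d)⟩
      fun i => v (a i * (β - α) ^ i) with hL
  have hfun : ∀ i, v (a i * (β' - α) ^ i) = v (a i * (β - α) ^ i) := by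
    intro i
    rw [hvmul, hvmul, aux_vpow v hv0 hvmul, aux_vpow v hv0 hvmul, heq]
  have hLeq : ((Finset.range (d + 1)).inf' ⟨0, Finset.mem_range.mpr (Nat.succ_pos d)⟩
      fun i => v (a i * (β' - α) ^ i)) = L := by
    rw [hL]; exact Finset.inf'_congr _ rfl fun i _ => hfun i
  rw [hLeq]
  have hLtop : L < ⊤ := lt_of_lt_of_le h le_top
  -- values in Γ
  have hβα : v (β - α) ≠ ⊤ := by simp [hv0, sub_ne_zero.mpr hβ]
  obtain ⟨γ, hγ⟩ := WithTop.ne_top_iff_exists.mp hβα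
  have hββne : v (β' - β) ≠ ⊤ := by simp [hv0, sub_ne_zero.mpr hne]
  -- bound on the difference
  have hdiff : L < v (∑ i ∈ Finset.range (d + 1), a i * (β' - α) ^ i
      - ∑ i ∈ Finset.range (d + 1), a i * (β - α) ^ i) := by
    rw [← Finset.sum_sub_distrib]
    have e : ∀ i, a i * (β' - α) ^ i - a i * (β - α) ^ i
        = a i * ((β' - α) ^ i - (β - α) ^ i) := by intro i; ring
    refine aux_sum_lt v hv0 hvadd _ _ _ hLtop ?_
    intro i hi
    rw [e]
    rcases eq_or_ne (a i) 0 with h0 | h0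
    · rw [h0, zero_mul]
      rw [show v (0:K) = ⊤ from (hv0 0).mpr rfl]
      exact hLtop
    rcases Nat.eq_zero_or_pos i with rfl | hipos
    · simpa [(hv0 0).mpr rfl] using hLtop
    obtain ⟨k, rfl⟩ := Nat.exists_eq_add_of_lt hipos
    rw [zero_add] at *
    -- i = k + 1
    have hgeom : (β' - α) ^ (k+1) - (β - α) ^ (k+1)
        = (∑ j ∈ Finset.range (k+1), (β' - α) ^ j * (β - α) ^ (k - j)) * (β' - β) := by
      have hg := geom_sum₂_mul (β' - α) (β - α) (k+1)
      have h2 : β' - α - (β - α) = β' - β := by ring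
      rw [h2] at hg
      rw [← hg]; norm_num
    rw [hgeom, hvmul, hvmul]
    have hS : (k • (γ : WithTop Γ)) ≤ v (∑ j ∈ Finset.range (k+1), (β' - α) ^ j * (β - α) ^ (k - j)) := by
      refine aux_sum_le v hv0 hvadd _ _ _ ?_
      intro j hj
      rw [hvmul, aux_vpow v hv0 hvmul, aux_vpow v hv0 hvmul, heq, ← hγ, ← add_nsmul]
      have : j + (k - j) = k := by
        have := Finset.mem_range.mp hj; omega
      rw [this]
    have hai : v (a (k+1)) ≠ ⊤ := by simp [hv0, h0]
    obtain ⟨ga, hga⟩ := WithTop.ne_top_iff_exists.mp hai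
    have hcoe_nsmul : ∀ (n : ℕ) (x : Γ), n • ((x : WithTop Γ)) = ((n • x : Γ) : WithTop Γ) := by
      intro n x
      induction n with
      | zero => simp
      | succ m ih => rw [succ_nsmul, succ_nsmul, ih, WithTop.coe_add]
    have hkγtop : k • ((γ : WithTop Γ)) ≠ ⊤ := by rw [hcoe_nsmul]; exact WithTop.coe_ne_top
    have hL_le : L ≤ v (a (k+1) * (β - α) ^ (k+1)) :=
      Finset.inf'_le _ hi
    have hval : v (a (k+1) * (β - α) ^ (k+1)) = ↑ga + ((k+1) • (γ : WithTop Γ)) := by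
      rw [hvmul, aux_vpow v hv0 hvmul, ← hga, hγ]
    calc L ≤ ↑ga + ((k+1) • (γ : WithTop Γ)) := hval ▸ hL_le
      _ = ↑ga + (k • (γ : WithTop Γ) + ↑γ) := by rw [succ_nsmul]
      _ < ↑ga + (k • (γ : WithTop Γ) + v (β' - β)) := by
          apply WithTop.add_lt_add_left WithTop.coe_ne_top
          exact WithTop.add_lt_add_left hkγtop (hγ ▸ hββ')
      _ ≤ v (a (k+1)) + (v (∑ j ∈ Finset.range (k+1), (β' - α) ^ j * (β - α) ^ (k - j)) + v (β' - β)) := by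
          rw [← hga]
          exact add_le_add_right (add_le_add_left hS _) _
  -- conclude
  have e2 : (∑ i ∈ Finset.range (d+1), a i * (β'-α)^i)
      = (∑ i ∈ Finset.range (d+1), a i * (β-α)^i)
        + ((∑ i ∈ Finset.range (d+1), a i * (β'-α)^i) - (∑ i ∈ Finset.range (d+1), a i * (β-α)^i)) := by
    ring
  rw [e2]
  exact lt_of_lt_of_le (lt_min h hdiff) (hvadd _ _)

include hv0 hvmul hvadd in
theorem stmt_16' (hsurj : Function.Surjective v)
    (α : K) (d : ℕ) (a : ℕ → K) (f : K[X])
    (hf : f = ∑ i ∈ Finset.range (d + 1), C (a i) * (X - C α) ^ i)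
    (β β' : K) (hβ : β ≠ α)
    (hββ' : v (β - α) < v (β' - β)) :
    (((Finset.range (d + 1)).inf' ⟨0, Finset.mem_range.mpr (Nat.succ_pos d)⟩
        fun i => v (a i * (β - α) ^ i)) < v (f.eval β)) ↔
    (((Finset.range (d + 1)).inf' ⟨0, Finset.mem_range.mpr (Nat.succ_pos d)⟩
        fun i => v (a i * (β' - α) ^ i)) < v (f.eval β')) := by
  have heval : ∀ x : K, f.eval x = ∑ i ∈ Finset.range (d + 1), a i * (x - α) ^ i := by
    intro x
    rw [hf]
    simp [eval_finset_sum]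
  rw [heval, heval]
  have heq : v (β' - α) = v (β - α) := aux_veq v hv0 hvmul hvadd α β β' hβ hββ'
  have hβ' : β' ≠ α := by
    intro hc
    have : v (β' - α) = ⊤ := (hv0 _).mpr (by rw [hc, sub_self])
    rw [heq] at this
    exact (by simp [hv0, sub_ne_zero.mpr hβ] : v (β - α) ≠ ⊤) this
  have hββ'2 : v (β' - α) < v (β - β') := by
    rw [heq]
    have : β - β' = -(β' - β) := by ring
    rw [this, aux_vneg v hv0 hvmul]
    exact hββ'
  constructor
  · exact aux_main v hv0 hvmul hvadd α d a β β' hβ hββ'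
  · exact aux_main v hv0 hvmul hvadd α d a β' β hβ' hββ'2

end aux


/-- If `f(x) = Σ_{i=0}^d a_i (x − α)^i`, `β ≠ α` and
`v(β′ − β) > v(β − α)` (i.e. `rv(β′ − α) = rv(β − α)`), then `f` has a collision
at `β` around `α` iff `f` has a collision at `β′` around `α`. -/
theorem stmt_16 {K : Type*} [Field K] {Γ : Type*} [AddCommGroup Γ] [LinearOrder Γ] [IsOrderedAddMonoid Γ]
    (v : K → WithTop Γ) (hsurj : Function.Surjective v)
    (hv0 : ∀ x : K, v x = ⊤ ↔ x = 0)
    (hvmul : ∀ x y : K, v (x * y) = v x + v y)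
    (hvadd : ∀ x y : K, min (v x) (v y) ≤ v (x + y))
    (α : K) (d : ℕ) (a : ℕ → K) (f : K[X])
    (hf : f = ∑ i ∈ Finset.range (d + 1), C (a i) * (X - C α) ^ i)
    (β β' : K) (hβ : β ≠ α)
    (hββ' : v (β - α) < v (β' - β)) :
    (((Finset.range (d + 1)).inf' ⟨0, Finset.mem_range.mpr (Nat.succ_pos d)⟩
        fun i => v (a i * (β - α) ^ i)) < v (f.eval β)) ↔
    (((Finset.range (d + 1)).inf' ⟨0, Finset.mem_range.mpr (Nat.succ_pos d)⟩
        fun i => v (a i * (β' - α) ^ i)) < v (f.eval β')) :=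
  stmt_16' v hv0 hvmul hvadd hsurj α d a f hf β β' hβ hββ'
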